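/- Let 0<μ<1/2, c>0, m>0, e_*>0, e^*≥e_* and c_m∈(0,1) satisfy (c²/(μ e_*²))·((1/c_m^μ)e^* − e_*) ≤ m². Set R₂ = (1/c_m)(e^*/c)^{1/μ} and f_*(x) = (e_*/μ)x^{1−2μ} − (c/μ)x^{1−μ} + m²x for x≥0. Then f_*(x) ≥ 0 for all x∈[0,R₂]. Consequently, if e:[0,T]→ℝ is continuous with min e = e_* and max e = e^*, then f_m(t,x) = (e(t)/μ)x^{1−2μ} − (c/μ)x^{1−μ} + m²x ≥ 0 for all t∈[0,T] and x∈[0,R₂]. -/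

import Mathlib

open Set Real

theorem statement11 (μ c m estar estar' cm R₂ : ℝ)
    (hμ0 : 0 < μ) (hμ : μ < 1/2) (hc : 0 < c) (hm : 0 < m)
    (hestar : 0 < estar) (hee : estar ≤ estar') (hcm : cm ∈ Set.Ioo (0:ℝ) 1)
    (hC6 : c ^ 2 / (μ * estar ^ 2) * (estar' / cm ^ μ - estar) ≤ m ^ 2)
    (hR₂ : R₂ = (1 / cm) * (estar' / c) ^ (1 / μ)) :
    (∀ x ∈ Set.Icc (0:ℝ) R₂,
      0 ≤ (estar / μ) * x ^ (1 - 2 * μ) - (c / μ) * x ^ (1 - μ) + m ^ 2 * x) ∧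
    (∀ T : ℝ, 0 < T → ∀ e : ℝ → ℝ, ContinuousOn e (Set.Icc 0 T) →
      IsLeast (e '' Set.Icc 0 T) estar → IsGreatest (e '' Set.Icc 0 T) estar' →
      ∀ t ∈ Set.Icc 0 T, ∀ x ∈ Set.Icc (0:ℝ) R₂,
        0 ≤ (e t / μ) * x ^ (1 - 2 * μ) - (c / μ) * x ^ (1 - μ) + m ^ 2 * x) := by
  obtain ⟨hcm0, hcm1⟩ := hcm
  have hestar' : 0 < estar' := lt_of_lt_of_le hestar hee
  have hA : (0:ℝ) < cm ^ μ := Real.rpow_pos_of_pos hcm0 μ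
  have hRμ : R₂ ^ μ = (cm ^ μ)⁻¹ * (estar' / c) := by
    rw [hR₂, Real.mul_rpow (by positivity) (by positivity), one_div,
      Real.inv_rpow hcm0.le, ← Real.rpow_mul (by positivity),
      one_div_mul_cancel (ne_of_gt hμ0), Real.rpow_one]
  have hcU : c * R₂ ^ μ = estar' / cm ^ μ := by
    rw [hRμ]; field_simp
  rw [← hcU] at hC6
  have hC6'' : c ^ 2 * (c * R₂ ^ μ - estar) ≤ m ^ 2 * (μ * estar ^ 2) := by
    rw [div_mul_eq_mul_div, div_le_iff₀ (by positivity)] at hC6; linarith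
  have key : ∀ e : ℝ, estar ≤ e → ∀ x ∈ Set.Icc (0:ℝ) R₂,
      0 ≤ (e / μ) * x ^ (1 - 2 * μ) - (c / μ) * x ^ (1 - μ) + m ^ 2 * x := by
    intro e he x hx
    obtain ⟨hx0, hxR⟩ := hx
    rcases eq_or_lt_of_le hx0 with h0 | hxpos
    · rw [← h0, Real.zero_rpow (by linarith : (0:ℝ) < 1 - 2 * μ).ne',
        Real.zero_rpow (by linarith : (0:ℝ) < 1 - μ).ne']
      simp
    · set u := x ^ μ with hu_def
      have hu : 0 < u := Real.rpow_pos_of_pos hxpos μ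
      have hX : 0 ≤ x ^ (1 - 2 * μ) := (Real.rpow_pos_of_pos hxpos _).le
      have hx1 : x ^ (1 - μ) = x ^ (1 - 2 * μ) * u := by
        rw [hu_def, ← Real.rpow_add hxpos, show 1 - 2 * μ + μ = 1 - μ by ring]
      have hx2 : x = x ^ (1 - 2 * μ) * u * u := by
        rw [hu_def, ← Real.rpow_add hxpos, ← Real.rpow_add hxpos,
          show 1 - 2 * μ + μ + μ = (1:ℝ) by ring, Real.rpow_one]
      have huU : u ≤ R₂ ^ μ := Real.rpow_le_rpow hx0 hxR hμ0.le
      -- quadratic inequality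
      have hP : 0 ≤ estar - c * u + μ * (m ^ 2 * u ^ 2) := by
        rcases le_or_gt (c * u) estar with h | h
        · have h1 : 0 ≤ μ * (m ^ 2 * u ^ 2) := by positivity
          linarith
        · have h1 : estar ^ 2 ≤ (c * u) ^ 2 := by nlinarith [h.le, hestar]
          have h2 : m ^ 2 * (μ * estar ^ 2) ≤ m ^ 2 * (μ * (c * u) ^ 2) :=
            mul_le_mul_of_nonneg_left (mul_le_mul_of_nonneg_left h1 hμ0.le) (sq_nonneg m)
          have h3 : c ^ 2 * (c * u - estar) ≤ c ^ 2 * (c * R₂ ^ μ - estar) :=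
            mul_le_mul_of_nonneg_left
              (sub_le_sub_right (mul_le_mul_of_nonneg_left huU hc.le) estar) (sq_nonneg c)
          have hring : m ^ 2 * (μ * (c * u) ^ 2) = c ^ 2 * (μ * (m ^ 2 * u ^ 2)) := by ring
          have h4 : c ^ 2 * (c * u - estar) ≤ c ^ 2 * (μ * (m ^ 2 * u ^ 2)) := by
            linarith
          have h5 : c * u - estar ≤ μ * (m ^ 2 * u ^ 2) :=
            (mul_le_mul_iff_right₀ (by positivity : (0:ℝ) < c ^ 2)).mp h4
          linarith
      have hQ : 0 ≤ estar / μ - c / μ * u + m ^ 2 * u ^ 2 := by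
        have h := div_nonneg hP hμ0.le
        have heq : (estar - c * u + μ * (m ^ 2 * u ^ 2)) / μ
            = estar / μ - c / μ * u + m ^ 2 * u ^ 2 := by
          field_simp
        rwa [heq] at h
      have hexp : e / μ * x ^ (1 - 2 * μ) - c / μ * x ^ (1 - μ) + m ^ 2 * x
          = x ^ (1 - 2 * μ) * (e / μ - c / μ * u + m ^ 2 * (u * u)) := by
        linear_combination (-(c / μ)) * hx1 + m ^ 2 * hx2
      rw [hexp]
      apply mul_nonneg hX
      have hd2 : estar / μ ≤ e / μ := by gcongr
      rw [show u * u = u ^ 2 from (sq u).symm]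
      linarith [hQ, hd2]
  constructor
  · intro x hx
    exact key estar le_rfl x hx
  · intro T hT e hce hmin hmax t ht x hx
    exact key (e t) (hmin.2 ⟨t, ht, rfl⟩) x hx
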